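/- arXiv:1406.4026 — 2 statements merged into one kernel-verified Lean document; each statement's English description precedes it below -/
import Mathlib

section
/- Let n, m be natural numbers, let b : ℝ × ℝⁿ → ℝⁿ, σ : ℝ × ℝⁿ → (n×m real matrices), V : ℝ × ℝⁿ → ℝ, and let J : ℝ × ℝⁿ → ℝ be differentiable in t and twice continuously differentiable in x at a point (t,x). Write ∇J for the spatial gradient and Hess J for the spatial Hessian matrix of J. If at (t,x) the Hamilton–Jacobi–Bellman equation -∂_t J = V - (1/2) ⟪σσᵀ ∇J, ∇J⟫ + ⟪b, ∇J⟫ + (1/2) Tr(σσᵀ · Hess J) holds, then ψ := exp(-J) satisfies ∂_t ψ + ⟪b, ∇ψ⟫ + (1/2) Tr(σσᵀ · Hess ψ) = V ψ at (t,x). -/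
open Matrix

/-- Spatial partial derivative of `f : ℝⁿ → ℝ` in direction `i`. -/
noncomputable def spatialPDeriv {n : ℕ} (f : (Fin n → ℝ) → ℝ) (i : Fin n)
    (y : Fin n → ℝ) : ℝ :=
  fderiv ℝ f y (Pi.single i 1)

/-- Spatial gradient of `f : ℝⁿ → ℝ`. -/
noncomputable def spatialGrad {n : ℕ} (f : (Fin n → ℝ) → ℝ) (y : Fin n → ℝ) :
    Fin n → ℝ :=
  fun i => spatialPDeriv f i y

/-- Spatial Hessian matrix of `f : ℝⁿ → ℝ`. -/
noncomputable def spatialHessian {n : ℕ} (f : (Fin n → ℝ) → ℝ) (y : Fin n → ℝ) :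
    Matrix (Fin n) (Fin n) ℝ :=
  fun i j => spatialPDeriv (spatialPDeriv f j) i y

lemma spatialPDeriv_exp_neg {n : ℕ} (f : (Fin n → ℝ) → ℝ) (y : Fin n → ℝ)
    (hf : DifferentiableAt ℝ f y) (j : Fin n) :
    spatialPDeriv (fun z => Real.exp (-f z)) j y =
      -(Real.exp (-f y) * spatialPDeriv f j y) := by
  have h : HasFDerivAt (fun z => Real.exp (-f z))
      (Real.exp (-f y) • (-(fderiv ℝ f y))) y := (hf.hasFDerivAt.neg).exp
  rw [spatialPDeriv, h.fderiv]
  simp [spatialPDeriv]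

lemma pderiv_diffAt {n : ℕ} (f : (Fin n → ℝ) → ℝ) (x : Fin n → ℝ)
    (hf : ContDiffAt ℝ 2 f x) (j : Fin n) :
    DifferentiableAt ℝ (spatialPDeriv f j) x := by
  have h1 : ContDiffAt ℝ 1 (fderiv ℝ f) x := hf.fderiv_right (by norm_num)
  have h2 := ((ContinuousLinearMap.apply ℝ ℝ (Pi.single j 1 : Fin n → ℝ)
      ).contDiff.contDiffAt.comp x h1)
  exact h2.differentiableAt (by norm_num)

lemma spatialHessian_exp_neg {n : ℕ} (f : (Fin n → ℝ) → ℝ) (x : Fin n → ℝ)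
    (hf : ContDiffAt ℝ 2 f x) (i j : Fin n) :
    spatialHessian (fun z => Real.exp (-f z)) x i j =
      Real.exp (-f x) * (spatialPDeriv f i x * spatialPDeriv f j x
        - spatialHessian f x i j) := by
  have hev : ∀ᶠ y in nhds x, DifferentiableAt ℝ f y :=
    (hf.eventually (by norm_num)).mono fun y hy =>
      hy.differentiableAt (by norm_num)
  have heq : spatialPDeriv (fun z => Real.exp (-f z)) j =ᶠ[nhds x]
      fun y => -Real.exp (-f y) * spatialPDeriv f j y := by
    filter_upwards [hev] with y hy
    rw [spatialPDeriv_exp_neg f y hy j]; ring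
  have hfx : DifferentiableAt ℝ f x := hf.differentiableAt (by norm_num)
  have hexp : HasFDerivAt (fun y => -Real.exp (-f y))
      (Real.exp (-f x) • fderiv ℝ f x) x := by
    have h : HasFDerivAt (fun y => -Real.exp (-f y))
        (-(Real.exp (-f x) • -fderiv ℝ f x)) x := ((hfx.hasFDerivAt.neg).exp).neg
    rw [smul_neg, neg_neg] at h; exact h
  have hg : DifferentiableAt ℝ (spatialPDeriv f j) x := pderiv_diffAt f x hf j
  have hprod := hexp.mul hg.hasFDerivAt
  have hDer : fderiv ℝ (spatialPDeriv (fun z => Real.exp (-f z)) j) x =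
      (-Real.exp (-f x)) • fderiv ℝ (spatialPDeriv f j) x +
        spatialPDeriv f j x • (Real.exp (-f x) • fderiv ℝ f x) := by
    rw [heq.fderiv_eq]
    exact hprod.fderiv
  have : spatialHessian (fun z => Real.exp (-f z)) x i j =
      fderiv ℝ (spatialPDeriv (fun z => Real.exp (-f z)) j) x (Pi.single i 1) := rfl
  rw [this, hDer]
  have hH : fderiv ℝ (spatialPDeriv f j) x (Pi.single i 1) =
      spatialHessian f x i j := rfl
  simp only [ContinuousLinearMap.add_apply, ContinuousLinearMap.smul_apply, hH]
  show -Real.exp (-f x) * spatialHessian f x i j +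
      spatialPDeriv f j x * (Real.exp (-f x) * fderiv ℝ f x (Pi.single i 1)) = _
  show -Real.exp (-f x) * spatialHessian f x i j +
      spatialPDeriv f j x * (Real.exp (-f x) * spatialPDeriv f i x) = _
  ring

/-- Logarithmic transformation linearizing the `n`-dimensional HJB equation:
if `J` satisfies `-∂ₜJ = V - (1/2)⟪σσᵀ∇J, ∇J⟫ + ⟪b, ∇J⟫ + (1/2)Tr(σσᵀ Hess J)` at `(t,x)`,
with `J` differentiable in `t` and twice continuously differentiable in `x` at `(t,x)`,
then `ψ := exp (-J)` satisfies `∂ₜψ + ⟪b, ∇ψ⟫ + (1/2)Tr(σσᵀ Hess ψ) = V ψ` at `(t,x)`. -/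
theorem colehopf_hjb_to_linear_multidim (n m : ℕ)
    (b : ℝ × (Fin n → ℝ) → Fin n → ℝ)
    (σ : ℝ × (Fin n → ℝ) → Matrix (Fin n) (Fin m) ℝ)
    (V : ℝ × (Fin n → ℝ) → ℝ)
    (J : ℝ × (Fin n → ℝ) → ℝ) (t : ℝ) (x : Fin n → ℝ)
    (hJt : DifferentiableAt ℝ (fun s => J (s, x)) t)
    (hJx : ContDiffAt ℝ 2 (fun y => J (t, y)) x)
    (hhjb : -deriv (fun s => J (s, x)) t =
      V (t, x) -
        (1 / 2 : ℝ) *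
          ((σ (t, x) * (σ (t, x))ᵀ).mulVec (spatialGrad (fun y => J (t, y)) x) ⬝ᵥ
            spatialGrad (fun y => J (t, y)) x) +
        (b (t, x) ⬝ᵥ spatialGrad (fun y => J (t, y)) x) +
        (1 / 2 : ℝ) *
          (σ (t, x) * (σ (t, x))ᵀ * spatialHessian (fun y => J (t, y)) x).trace) :
    let ψ : ℝ × (Fin n → ℝ) → ℝ := fun p => Real.exp (-J p)
    deriv (fun s => ψ (s, x)) t + (b (t, x) ⬝ᵥ spatialGrad (fun y => ψ (t, y)) x) +
      (1 / 2 : ℝ) * (σ (t, x) * (σ (t, x))ᵀ * spatialHessian (fun y => ψ (t, y)) x).trace =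
      V (t, x) * ψ (t, x) := by
  intro ψ
  set f : (Fin n → ℝ) → ℝ := fun y => J (t, y) with hf
  set A : Matrix (Fin n) (Fin n) ℝ := σ (t, x) * (σ (t, x))ᵀ with hA
  set G : Fin n → ℝ := spatialGrad f x with hG
  set E : ℝ := Real.exp (-f x) with hE
  have hfx : DifferentiableAt ℝ f x := hJx.differentiableAt (by norm_num)
  -- time derivative
  have ht : deriv (fun s => ψ (s, x)) t = E * -(deriv (fun s => J (s, x)) t) := by
    have h : HasDerivAt (fun s => Real.exp (-J (s, x)))
        (Real.exp (-J (t, x)) * -(deriv (fun s => J (s, x)) t)) t :=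
      (hJt.hasDerivAt.neg).exp
    exact h.deriv
  -- gradient
  have hgrad : ∀ i, spatialGrad (fun y => ψ (t, y)) x i = -(E * G i) := by
    intro i
    exact spatialPDeriv_exp_neg f x hfx i
  -- Hessian
  have hhess : ∀ i j, spatialHessian (fun y => ψ (t, y)) x i j =
      E * (G i * G j - spatialHessian f x i j) := by
    intro i j
    exact spatialHessian_exp_neg f x hJx i j
  -- trace identity
  have htr : (A * spatialHessian (fun y => ψ (t, y)) x).trace =
      E * ((A.mulVec G ⬝ᵥ G) - (A * spatialHessian f x).trace) := by
    simp only [Matrix.trace, Matrix.diag, Matrix.mul_apply, Matrix.mulVec,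
      dotProduct, hhess]
    rw [mul_sub, Finset.mul_sum, Finset.mul_sum, ← Finset.sum_sub_distrib]
    refine Finset.sum_congr rfl fun i _ => ?_
    rw [Finset.sum_mul, Finset.mul_sum, Finset.mul_sum, ← Finset.sum_sub_distrib]
    refine Finset.sum_congr rfl fun j _ => ?_
    ring
  -- dot product with b
  have hb : (b (t, x) ⬝ᵥ spatialGrad (fun y => ψ (t, y)) x) =
      -(E * (b (t, x) ⬝ᵥ G)) := by
    simp only [dotProduct, hgrad]
    rw [Finset.mul_sum, ← Finset.sum_neg_distrib]
    exact Finset.sum_congr rfl fun i _ => by ring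
  have hψ : ψ (t, x) = E := rfl
  rw [ht, hb, htr, hψ, hhjb]
  ring
end

section
/- Let Q > 0 and t₁ be real numbers, and define J : ℝ × ℝ → ℝ by J(t,x) = Q (log x)² / (2(Q(t₁ - t) + 1)) + (1/2) log(Q(t₁ - t) + 1). Then for every t ≤ t₁ and every x > 0, J satisfies the Hamilton–Jacobi–Bellman equation of the geometric Brownian motion control problem: ∂_t J(t,x) = (1/2) (x ∂_x J(t,x))² - (x/2) ∂_x J(t,x) - (1/2) x² ∂_{xx} J(t,x), together with the boundary condition J(t₁, x) = (Q/2)(log x)². -/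
/-- Optimal cost-to-go of the geometric Brownian motion control problem. -/
noncomputable def gbmJ (Q t₁ : ℝ) : ℝ × ℝ → ℝ := fun p =>
  Q * (Real.log p.2) ^ 2 / (2 * (Q * (t₁ - p.1) + 1)) +
    (1 / 2 : ℝ) * Real.log (Q * (t₁ - p.1) + 1)

/-- The cost-to-go `J(t,x) = Q(log x)²/(2(Q(t₁-t)+1)) + (1/2)log(Q(t₁-t)+1)` satisfies the
HJB equation `∂ₜJ = (1/2)(x ∂ₓJ)² - (x/2)∂ₓJ - (1/2)x² ∂ₓₓJ` of the geometric Brownian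
motion control problem for all `t ≤ t₁`, `x > 0`, with boundary condition
`J(t₁,x) = (Q/2)(log x)²`. -/
theorem gbm_hjb_solution (Q t₁ : ℝ) (hQ : 0 < Q) :
    ∀ t ≤ t₁, ∀ x > 0,
      (deriv (fun s => gbmJ Q t₁ (s, x)) t =
        (1 / 2 : ℝ) * (x * deriv (fun y => gbmJ Q t₁ (t, y)) x) ^ 2 -
          (x / 2) * deriv (fun y => gbmJ Q t₁ (t, y)) x -
          (1 / 2 : ℝ) * x ^ 2 * deriv (deriv (fun y => gbmJ Q t₁ (t, y))) x) ∧
      gbmJ Q t₁ (t₁, x) = (Q / 2) * (Real.log x) ^ 2 := by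
  intro t ht x hx
  have ha : 0 < Q * (t₁ - t) + 1 := by nlinarith
  have ha' : Q * (t₁ - t) + 1 ≠ 0 := ne_of_gt ha
  -- derivative in t
  have hdt : deriv (fun s => gbmJ Q t₁ (s, x)) t =
      Q ^ 2 * (Real.log x) ^ 2 / (2 * (Q * (t₁ - t) + 1) ^ 2) -
        Q / (2 * (Q * (t₁ - t) + 1)) := by
    have hg : HasDerivAt (fun s : ℝ => Q * (t₁ - s) + 1) (-Q) t := by
      simpa using (((hasDerivAt_id t).const_sub t₁).const_mul Q).add_const 1
    have h1 : HasDerivAt (fun s : ℝ => Q * (Real.log x) ^ 2 / (2 * (Q * (t₁ - s) + 1)))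
        (Q ^ 2 * (Real.log x) ^ 2 / (2 * (Q * (t₁ - t) + 1) ^ 2)) t := by
      have := (hasDerivAt_const t (Q * (Real.log x) ^ 2)).div (hg.const_mul 2)
        (by positivity)
      refine this.congr_deriv ?_
      field_simp
      ring
    have h2 : HasDerivAt (fun s : ℝ => (1 / 2 : ℝ) * Real.log (Q * (t₁ - s) + 1))
        (-(Q / (2 * (Q * (t₁ - t) + 1)))) t := by
      have := (hg.log ha').const_mul (1 / 2 : ℝ)
      refine this.congr_deriv ?_
      field_simp
    have h := (h1.add h2).deriv
    simp only [gbmJ]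
    rw [show (fun s => Q * Real.log x ^ 2 / (2 * (Q * (t₁ - s) + 1)) +
        1 / 2 * Real.log (Q * (t₁ - s) + 1)) =
      (fun s : ℝ => Q * (Real.log x) ^ 2 / (2 * (Q * (t₁ - s) + 1))) +
      (fun s : ℝ => (1 / 2 : ℝ) * Real.log (Q * (t₁ - s) + 1)) from rfl] at ⊢
    rw [h]
    ring
  -- derivative in x, at any positive point
  have hdx : ∀ y : ℝ, 0 < y → deriv (fun y => gbmJ Q t₁ (t, y)) y =
      Q * Real.log y / ((Q * (t₁ - t) + 1) * y) := by
    intro y hy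
    have hl : HasDerivAt Real.log y⁻¹ y := Real.hasDerivAt_log hy.ne'
    have h : HasDerivAt (fun y : ℝ => Q * (Real.log y) ^ 2 / (2 * (Q * (t₁ - t) + 1)) +
        (1 / 2 : ℝ) * Real.log (Q * (t₁ - t) + 1))
        (Q * Real.log y / ((Q * (t₁ - t) + 1) * y)) y := by
      have := (((hl.pow 2).const_mul Q).div_const (2 * (Q * (t₁ - t) + 1))).add_const
        ((1 / 2 : ℝ) * Real.log (Q * (t₁ - t) + 1))
      refine this.congr_deriv ?_
      field_simp
      ring
    simpa only [gbmJ] using h.deriv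
  have hdx' := hdx x hx
  -- second derivative in x
  have hdxx : deriv (deriv (fun y => gbmJ Q t₁ (t, y))) x =
      Q * (1 - Real.log x) / ((Q * (t₁ - t) + 1) * x ^ 2) := by
    have hEq : deriv (fun y => gbmJ Q t₁ (t, y)) =ᶠ[nhds x]
        fun y => Q * Real.log y / ((Q * (t₁ - t) + 1) * y) := by
      filter_upwards [isOpen_Ioi.mem_nhds hx] with y hy using hdx y hy
    rw [hEq.deriv_eq]
    have hl : HasDerivAt Real.log x⁻¹ x := Real.hasDerivAt_log hx.ne'
    have h : HasDerivAt (fun y : ℝ => Q * Real.log y / ((Q * (t₁ - t) + 1) * y))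
        (Q * (1 - Real.log x) / ((Q * (t₁ - t) + 1) * x ^ 2)) x := by
      have hden : HasDerivAt (fun y : ℝ => (Q * (t₁ - t) + 1) * y)
          (Q * (t₁ - t) + 1) x := by
        simpa using (hasDerivAt_id x).const_mul (Q * (t₁ - t) + 1)
      have := (hl.const_mul Q).div hden (by positivity)
      refine this.congr_deriv ?_
      field_simp
    exact h.deriv
  refine ⟨?_, ?_⟩
  · rw [hdt, hdx', hdxx]
    field_simp
    ring
  · simp [gbmJ]
    ring
end
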